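/- Let C ≠ 0 and K ≠ 0 be real numbers and define f : ℝ → ℝ by f(u) = (C/2)e^{Ku} + ((1 − K²)/(2CK²))e^{−Ku}. Then f satisfies the ordinary differential equation f(u)(1 + f′(u)²) = f″(u)(1 + f(u)²) for all u ∈ ℝ. (This ODE is exactly the condition for the surface (u, v, f(u)cos v, f(u)sin v) in ℝ⁴ to be minimal; the choice K = 1 recovers the holomorphic solution e^u.) -/

import Mathlib

noncomputable section

/-- `f(u) = (C/2)e^{Ku} + ((1 − K²)/(2CK²))e^{−Ku}`. -/
def fSol (C K : ℝ) : ℝ → ℝ := fun u =>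
  C / 2 * Real.exp (K * u) + (1 - K ^ 2) / (2 * C * K ^ 2) * Real.exp (-(K * u))

lemma fSol_hasDeriv (C K : ℝ) (u : ℝ) :
    HasDerivAt (fSol C K)
      (C / 2 * K * Real.exp (K * u)
        - (1 - K ^ 2) / (2 * C * K ^ 2) * K * Real.exp (-(K * u))) u := by
  have h1 : HasDerivAt (fun u : ℝ => Real.exp (K * u)) (K * Real.exp (K * u)) u := by
    simpa [mul_comm] using (HasDerivAt.exp ((hasDerivAt_id u).const_mul K))
  have h2 : HasDerivAt (fun u : ℝ => Real.exp (-(K * u))) (-K * Real.exp (-(K * u))) u := by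
    have := (HasDerivAt.exp (((hasDerivAt_id u).const_mul K).neg))
    simpa [mul_comm] using this
  have := (h1.const_mul (C / 2)).add (h2.const_mul ((1 - K ^ 2) / (2 * C * K ^ 2)))
  convert this using 1
  · rfl
  · rfl
  · rfl
  · ring

lemma deriv_fSol (C K : ℝ) :
    deriv (fSol C K) = fun u =>
      C / 2 * K * Real.exp (K * u)
        - (1 - K ^ 2) / (2 * C * K ^ 2) * K * Real.exp (-(K * u)) := by
  funext u; exact (fSol_hasDeriv C K u).deriv

lemma deriv2_fSol (C K : ℝ) (u : ℝ) :
    deriv (deriv (fSol C K)) u =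
      C / 2 * K ^ 2 * Real.exp (K * u)
        + (1 - K ^ 2) / (2 * C * K ^ 2) * K ^ 2 * Real.exp (-(K * u)) := by
  rw [deriv_fSol]
  have h1 : HasDerivAt (fun u : ℝ => Real.exp (K * u)) (K * Real.exp (K * u)) u := by
    simpa [mul_comm] using (HasDerivAt.exp ((hasDerivAt_id u).const_mul K))
  have h2 : HasDerivAt (fun u : ℝ => Real.exp (-(K * u))) (-K * Real.exp (-(K * u))) u := by
    simpa [mul_comm] using (HasDerivAt.exp (((hasDerivAt_id u).const_mul K).neg))
  have := (h1.const_mul (C / 2 * K)).sub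
    (h2.const_mul ((1 - K ^ 2) / (2 * C * K ^ 2) * K))
  have h := this.deriv
  rw [show (fun u => C / 2 * K * Real.exp (K * u)
        - (1 - K ^ 2) / (2 * C * K ^ 2) * K * Real.exp (-(K * u)))
      = ((fun x => C / 2 * K * Real.exp (K * x))
        - fun x => (1 - K ^ 2) / (2 * C * K ^ 2) * K * Real.exp (-(K * x))) from rfl, h]
  ring

/-- the explicit function `f` solves the ODE
`f(1 + (f′)²) = f″(1 + f²)`, which is the minimality condition for the surface
`(u, v, f(u)cos v, f(u)sin v)` in `ℝ⁴`. -/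
theorem stmt13 (C K : ℝ) (hC : C ≠ 0) (hK : K ≠ 0) (u : ℝ) :
    fSol C K u * (1 + (deriv (fSol C K) u) ^ 2)
      = deriv (deriv (fSol C K)) u * (1 + (fSol C K u) ^ 2) := by
  rw [deriv2_fSol, deriv_fSol]
  have hmul : Real.exp (K * u) * Real.exp (-(K * u)) = 1 := by
    rw [← Real.exp_add]; simp
  have ha : Real.exp (K * u) ≠ 0 := Real.exp_ne_zero _
  have hb : Real.exp (-(K * u)) = 1 / Real.exp (K * u) := by
    field_simp at hmul ⊢; linarith [hmul]
  simp only [fSol, hb]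
  field_simp
  ring
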